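/- Let a, b, c be three points in ℝ². Let M be the 4×4 symmetric matrix whose (0,0) entry is 0, whose remaining first row and first column entries are all 1, and whose lower-right 3×3 block D has entries D_{lj} = d_{lj}² where d_{lj} is the Euclidean distance between the l-th and j-th of the points a, b, c (so D has zero diagonal). Then the determinant of M equals −16 times the square of the area of the triangle with vertices a, b, c: det M = −16 · A(a,b,c)², where A(a,b,c) is the 2-dimensional Lebesgue measure of the convex hull of {a, b, c}. -/

import Mathlib

open MeasureTheory Pointwise

section Aux

/-- volume of the closed triangle in `ℝ × ℝ` with vertices `(0,0)`, `(1,0)`, `(0,1)`. -/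
lemma CM.tri_vol : volume {p : ℝ × ℝ | 0 ≤ p.1 ∧ 0 ≤ p.2 ∧ p.1 + p.2 ≤ 1} = ENNReal.ofReal (1/2) := by
  have hmeas : MeasurableSet {p : ℝ × ℝ | 0 ≤ p.1 ∧ 0 ≤ p.2 ∧ p.1 + p.2 ≤ 1} := by
    apply MeasurableSet.inter
    · exact measurableSet_le measurable_const measurable_fst
    apply MeasurableSet.inter
    · exact measurableSet_le measurable_const measurable_snd
    · exact measurableSet_le (measurable_fst.add measurable_snd) measurable_const
  have hv : (volume : Measure (ℝ × ℝ)) = (volume : Measure ℝ).prod volume := rfl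
  rw [hv, Measure.prod_apply hmeas]
  have hpre : ∀ x : ℝ, Prod.mk x ⁻¹' {p : ℝ × ℝ | 0 ≤ p.1 ∧ 0 ≤ p.2 ∧ p.1 + p.2 ≤ 1}
      = if x ∈ Set.Icc (0:ℝ) 1 then Set.Icc 0 (1 - x) else ∅ := by
    intro x
    by_cases hx : x ∈ Set.Icc (0:ℝ) 1
    · rw [if_pos hx]
      ext y; simp only [Set.mem_preimage, Set.mem_setOf_eq, Set.mem_Icc]
      constructor
      · rintro ⟨_, h2, h3⟩; exact ⟨h2, by linarith⟩
      · rintro ⟨h2, h3⟩; exact ⟨hx.1, h2, by linarith⟩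
    · rw [if_neg hx]
      ext y; simp only [Set.mem_preimage, Set.mem_setOf_eq, Set.mem_empty_iff_false, iff_false]
      rintro ⟨h1, h2, h3⟩
      exact hx ⟨h1, by linarith [Set.mem_Icc.not.mp hx]⟩
  calc ∫⁻ x, volume (Prod.mk x ⁻¹' {p : ℝ × ℝ | 0 ≤ p.1 ∧ 0 ≤ p.2 ∧ p.1 + p.2 ≤ 1})
      = ∫⁻ x, Set.indicator (Set.Icc (0:ℝ) 1) (fun x => ENNReal.ofReal (1 - x)) x := by
        apply lintegral_congr; intro x
        rw [hpre x]
        by_cases hx : x ∈ Set.Icc (0:ℝ) 1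
        · rw [if_pos hx, Set.indicator_of_mem hx, Real.volume_Icc, sub_zero]
        · rw [if_neg hx, Set.indicator_of_notMem hx, measure_empty]
    _ = ∫⁻ x in Set.Icc (0:ℝ) 1, ENNReal.ofReal (1 - x) := by
        rw [lintegral_indicator measurableSet_Icc]
    _ = ENNReal.ofReal (∫ x in Set.Icc (0:ℝ) 1, (1 - x)) := by
        rw [← ofReal_integral_eq_lintegral_ofReal]
        · exact (continuous_const.sub continuous_id).integrableOn_Icc
        · filter_upwards [ae_restrict_mem measurableSet_Icc] with x hx
          simp only [Pi.zero_apply]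
          simp only [Set.mem_Icc] at hx; linarith [hx.2]
    _ = ENNReal.ofReal (1/2) := by
        congr 1
        rw [MeasureTheory.integral_Icc_eq_integral_Ioc,
          ← intervalIntegral.integral_of_le (by norm_num : (0:ℝ) ≤ 1)]
        rw [intervalIntegral.integral_sub (intervalIntegrable_const (c := (1:ℝ)))
          (intervalIntegral.intervalIntegrable_id)]
        simp
        norm_num

noncomputable abbrev CM.E2 := EuclideanSpace ℝ (Fin 2)

lemma CM.e_tri_vol : volume {x : CM.E2 | 0 ≤ x 0 ∧ 0 ≤ x 1 ∧ x 0 + x 1 ≤ 1}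
    = ENNReal.ofReal (1/2) := by
  have hmp : MeasurePreserving
      ((MeasurableEquiv.toLp 2 (Fin 2 → ℝ)).symm.trans (MeasurableEquiv.finTwoArrow)) volume volume :=
    (volume_preserving_finTwoArrow ℝ).comp (EuclideanSpace.volume_preserving_symm_measurableEquiv_toLp (Fin 2))
  have hmeas : MeasurableSet {p : ℝ × ℝ | 0 ≤ p.1 ∧ 0 ≤ p.2 ∧ p.1 + p.2 ≤ 1} := by
    apply MeasurableSet.inter
    · exact measurableSet_le measurable_const measurable_fst
    apply MeasurableSet.inter
    · exact measurableSet_le measurable_const measurable_snd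
    · exact measurableSet_le (measurable_fst.add measurable_snd) measurable_const
  have := hmp.measure_preimage hmeas.nullMeasurableSet
  rw [← CM.tri_vol, ← this]
  congr 1

noncomputable def CM.p₀ : CM.E2 := EuclideanSpace.single 0 1
noncomputable def CM.p₁ : CM.E2 := EuclideanSpace.single 1 1

lemma CM.hull_eq : convexHull ℝ ({0, CM.p₀, CM.p₁} : Set CM.E2)
    = {x : CM.E2 | 0 ≤ x 0 ∧ 0 ≤ x 1 ∧ x 0 + x 1 ≤ 1} := by
  apply Set.Subset.antisymm
  · apply convexHull_min
    · rintro x (rfl | rfl | rfl) <;>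
        simp [CM.p₀, CM.p₁, EuclideanSpace.single_apply, Set.mem_setOf_eq]
    · rintro x ⟨hx0, hx1, hxs⟩ y ⟨hy0, hy1, hys⟩ s t hs ht hst
      refine ⟨?_, ?_, ?_⟩ <;>
        simp only [Set.mem_setOf_eq, PiLp.add_apply, PiLp.smul_apply, smul_eq_mul] <;> nlinarith
  · rintro x ⟨hx0, hx1, hxs⟩
    have hmem := Finset.centerMass_mem_convexHull (s := ({0, CM.p₀, CM.p₁} : Set CM.E2))
      (t := (Finset.univ : Finset (Fin 3)))
      (w := ![1 - x 0 - x 1, x 0, x 1]) (z := ![0, CM.p₀, CM.p₁]) ?_ ?_ ?_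
    · have hsum : ∑ i, (![1 - x 0 - x 1, x 0, x 1] : Fin 3 → ℝ) i = 1 := by
        simp [Fin.sum_univ_three]; ring
      rw [Finset.centerMass_eq_of_sum_1 _ _ hsum] at hmem
      convert hmem using 1
      ext j
      fin_cases j <;>
        simp [Fin.sum_univ_three, CM.p₀, CM.p₁, EuclideanSpace.single_apply, PiLp.add_apply,
          PiLp.smul_apply]
    · intro i _; fin_cases i <;> simp <;> linarith
    · simp [Fin.sum_univ_three]; linarith
    · intro i _; fin_cases i <;> simp [Set.mem_insert_iff]

/-- the linear map sending `e₀ ↦ u`, `e₁ ↦ v`. -/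
noncomputable def CM.shear (u v : CM.E2) : CM.E2 →ₗ[ℝ] CM.E2 where
  toFun x := x 0 • u + x 1 • v
  map_add' x y := by
    simp only [PiLp.add_apply, add_smul]; abel
  map_smul' s x := by
    simp only [PiLp.smul_apply, smul_eq_mul, RingHom.id_apply, smul_add, mul_smul]

lemma CM.shear_det (u v : CM.E2) : LinearMap.det (CM.shear u v) = u 0 * v 1 - v 0 * u 1 := by
  let B := (EuclideanSpace.basisFun (Fin 2) ℝ).toBasis
  rw [← LinearMap.det_toMatrix B]
  rw [Matrix.det_fin_two]
  simp [LinearMap.toMatrix_apply, B, CM.shear, EuclideanSpace.basisFun_apply,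
    EuclideanSpace.single_apply]

/-- Area of a triangle in the plane via the cross product of edge vectors. -/
lemma CM.vol_triangle (a b c : CM.E2) : volume (convexHull ℝ ({a, b, c} : Set CM.E2))
    = ENNReal.ofReal (|(b 0 - a 0) * (c 1 - a 1) - (c 0 - a 0) * (b 1 - a 1)| / 2) := by
  set u := b - a with hu
  set v := c - a with hv
  set f := CM.shear u v with hf
  have himg : (fun x => a + f x) '' ({0, CM.p₀, CM.p₁} : Set CM.E2) = {a, b, c} := by
    simp only [Set.image_insert_eq, Set.image_singleton, Set.image_pair]
    have h0 : f 0 = 0 := by simp [hf, CM.shear]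
    have h1 : f CM.p₀ = u := by
      simp [hf, CM.shear, CM.p₀, EuclideanSpace.single_apply]
    have h2 : f CM.p₁ = v := by
      simp [hf, CM.shear, CM.p₁, EuclideanSpace.single_apply]
    rw [h0, h1, h2]
    simp [hu, hv]
  let g : CM.E2 →ᵃ[ℝ] CM.E2 :=
    { toFun := fun x => a + f x
      linear := f
      map_vadd' := fun p w => by
        show a + f (w + p) = f w + (a + f p)
        rw [map_add]; abel }
  have hg : convexHull ℝ ({a, b, c} : Set CM.E2)
      = (fun x => a + x) '' (f '' (convexHull ℝ ({0, CM.p₀, CM.p₁} : Set CM.E2))) := by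
    have hco : (fun x => a + f x) = ⇑g := rfl
    rw [← himg, hco, ← AffineMap.image_convexHull g, ← hco]
    exact (Set.image_image (fun x => a + x) (⇑f) _).symm
  rw [hg]
  have htrans : volume ((fun x => a + x) '' (f '' (convexHull ℝ ({0, CM.p₀, CM.p₁} : Set CM.E2))))
      = volume (f '' (convexHull ℝ ({0, CM.p₀, CM.p₁} : Set CM.E2))) := by
    have hva : (fun x => a + x) '' (f '' (convexHull ℝ ({0, CM.p₀, CM.p₁} : Set CM.E2)))
        = a +ᵥ (f '' (convexHull ℝ ({0, CM.p₀, CM.p₁} : Set CM.E2))) := rfl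
    rw [hva, measure_vadd]
  rw [htrans, Measure.addHaar_image_linearMap, CM.hull_eq, CM.e_tri_vol, CM.shear_det]
  rw [← ENNReal.ofReal_mul (by positivity)]
  congr 1
  simp only [hu, hv, PiLp.sub_apply]
  ring

lemma CM.dist_sq (x y : EuclideanSpace ℝ (Fin 2)) :
    dist x y ^ 2 = (x 0 - y 0) ^ 2 + (x 1 - y 1) ^ 2 := by
  rw [EuclideanSpace.dist_eq, Real.sq_sqrt (by positivity)]
  simp [Fin.sum_univ_two, Real.dist_eq, sq_abs]

lemma CM.det4 (x y z : ℝ) :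
    (!![0, 1, 1, 1; 1, 0, x, y; 1, x, 0, z; 1, y, z, 0] : Matrix (Fin 4) (Fin 4) ℝ).det
      = x ^ 2 + y ^ 2 + z ^ 2 - 2 * (x * y + x * z + y * z) := by
  simp only [Matrix.det_succ_row_zero, Fin.sum_univ_succ, Matrix.submatrix_apply,
    Matrix.det_fin_zero, Finset.univ_unique, Finset.sum_singleton, Matrix.cons_val',
    Matrix.cons_val_zero, Matrix.cons_val_one, Matrix.head_cons, Matrix.head_fin_const,
    Matrix.cons_val_fin_one, Matrix.empty_val', Fin.succ_zero_eq_one, Fin.succ_one_eq_two]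
  norm_num [Fin.succAbove, Fin.lt_def, Matrix.vecHead, Matrix.vecTail, Fin.castSucc,
    Fin.castAdd, Fin.castLE, Matrix.cons_val_succ]
  simp [Matrix.cons_val]
  ring

end Aux

/-- The Cayley–Menger matrix of three points `a b c` in the plane: the `4 × 4`
symmetric matrix with `(0,0)` entry `0`, remaining first-row and first-column entries
`1`, and lower-right `3 × 3` block the matrix of squared pairwise distances. -/
noncomputable def cayleyMenger (a b c : EuclideanSpace ℝ (Fin 2)) :
    Matrix (Fin 4) (Fin 4) ℝ :=
  Matrix.of (Fin.cons (Fin.cons 0 fun _ => 1)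
    (fun i => Fin.cons 1 fun j => dist (![a, b, c] i) (![a, b, c] j) ^ 2))

lemma CM.cm_eq (a b c : EuclideanSpace ℝ (Fin 2)) :
    cayleyMenger a b c =
      !![0, 1, 1, 1;
         1, dist a a ^ 2, dist a b ^ 2, dist a c ^ 2;
         1, dist b a ^ 2, dist b b ^ 2, dist b c ^ 2;
         1, dist c a ^ 2, dist c b ^ 2, dist c c ^ 2] := by
  ext i j
  fin_cases i <;> fin_cases j <;> rfl

lemma CM.cm_det (a b c : EuclideanSpace ℝ (Fin 2)) :
    (cayleyMenger a b c).det
      = -4 * ((b 0 - a 0) * (c 1 - a 1) - (c 0 - a 0) * (b 1 - a 1)) ^ 2 := by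
  rw [CM.cm_eq, dist_self, dist_comm b a, dist_comm c a, dist_comm c b]
  norm_num [CM.det4, CM.dist_sq]
  ring

/-- Cayley–Menger determinant formula in the plane (Eqs. (10)-(11) with `m = 2`):
the determinant of the Cayley–Menger matrix of `a, b, c` equals `−16` times the
square of the area of the triangle with vertices `a, b, c`. -/
theorem cayleyMenger_det_eq_neg_sixteen_mul_area_sq (a b c : EuclideanSpace ℝ (Fin 2)) :
    (cayleyMenger a b c).det =
      -16 * (volume (convexHull ℝ ({a, b, c} : Set (EuclideanSpace ℝ (Fin 2))))).toReal ^ 2 := by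
  rw [CM.cm_det, CM.vol_triangle, ENNReal.toReal_ofReal (by positivity), div_pow, sq_abs]
  ring
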